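/- Let N, M ≥ 1, let Q ∈ ℝ^{N×M} be row-stochastic with strictly positive entries, let a ∈ ℝ^N with a_n ≥ 0 for all n, and let b ∈ ℝ satisfy min_n a_n < b. Define g(λ) = sup_{p ∈ Δ_N} [ I(p,Q) + λ(b − Σ_{n=1}^N a_n p_n) ] for λ ∈ ℝ. Then for every Λ > log N / (b − min_n a_n) there exists d > 0 such that d is a subgradient of g at Λ, i.e., g(t) ≥ g(Λ) + d·(t − Λ) for all t ∈ ℝ. -/

import Mathlib

open Real

/-- Average mutual information `I(p,Q)`. -/
noncomputable def AMI {N M : ℕ} (p : Fin N → ℝ) (Q : Fin N → Fin M → ℝ) : ℝ :=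
  ∑ n, ∑ m, p n * Q n m * Real.log (Q n m / ∑ l, p l * Q l m)

/-- `Q` is row-stochastic with strictly positive entries. -/
def rowStochPos {N M : ℕ} (Q : Fin N → Fin M → ℝ) : Prop :=
  (∀ n m, 0 < Q n m) ∧ ∀ n, ∑ m, Q n m = 1

/-- The Lagrangian dual function `g(λ)` of the average-cost constrained capacity problem. -/
noncomputable def gfun {N M : ℕ} (Q : Fin N → Fin M → ℝ) (a : Fin N → ℝ) (b : ℝ)
    (lam : ℝ) : ℝ :=
  sSup { x | ∃ p ∈ stdSimplex ℝ (Fin N), x = AMI p Q + lam * (b - ∑ n, a n * p n) }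

lemma denom_pos {N M : ℕ} (Q : Fin N → Fin M → ℝ) (hQ : rowStochPos Q) {p : Fin N → ℝ}
    (hp : p ∈ stdSimplex ℝ (Fin N)) (m : Fin M) : 0 < ∑ l, p l * Q l m := by
  obtain ⟨hp0, hp1⟩ := hp
  have hne : ∃ l ∈ Finset.univ, p l ≠ 0 := by
    by_contra h
    push_neg at h
    simp only [Finset.mem_univ, forall_true_left] at h
    rw [Finset.sum_eq_zero (fun l _ => h l)] at hp1
    norm_num at hp1
  obtain ⟨l, _, hl⟩ := hne
  refine Finset.sum_pos' (fun i _ => mul_nonneg (hp0 i) (hQ.1 i m).le) ⟨l, Finset.mem_univ l, ?_⟩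
  exact mul_pos (lt_of_le_of_ne (hp0 l) (Ne.symm hl)) (hQ.1 l m)

lemma ami_le_log {N M : ℕ} (Q : Fin N → Fin M → ℝ) (hQ : rowStochPos Q) {p : Fin N → ℝ}
    (hp : p ∈ stdSimplex ℝ (Fin N)) : AMI p Q ≤ Real.log N := by
  have hN : 0 < N := by
    rcases Nat.eq_zero_or_pos N with h | h
    · subst h; exact absurd hp.2 (by simp)
    · exact h
  have key1 : AMI p Q ≤ ∑ n, -(p n * Real.log (p n)) := by
    unfold AMI
    refine Finset.sum_le_sum fun n _ => ?_
    rcases eq_or_lt_of_le (hp.1 n) with h0 | hpos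
    · simp [← h0]
    · have hrw : -(p n * Real.log (p n)) = ∑ m, p n * Q n m * (-Real.log (p n)) := by
        rw [← Finset.sum_mul, ← Finset.mul_sum, hQ.2 n]
        ring
      rw [hrw]
      refine Finset.sum_le_sum fun m _ => ?_
      have hqm := denom_pos Q hQ ⟨hp.1, hp.2⟩ m
      have hle : p n * Q n m ≤ ∑ l, p l * Q l m :=
        Finset.single_le_sum (fun i _ => mul_nonneg (hp.1 i) (hQ.1 i m).le) (Finset.mem_univ n)
      have hkey : Real.log (Q n m / ∑ l, p l * Q l m) ≤ -Real.log (p n) := by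
        have h1 : Real.log (p n * Q n m / ∑ l, p l * Q l m) ≤ 0 :=
          Real.log_nonpos (div_nonneg (mul_nonneg (hp.1 n) (hQ.1 n m).le) hqm.le)
            (by rw [div_le_one hqm]; exact hle)
        have h2 : Real.log (p n * Q n m / ∑ l, p l * Q l m)
            = Real.log (p n) + Real.log (Q n m / ∑ l, p l * Q l m) := by
          rw [mul_div_assoc, Real.log_mul (ne_of_gt hpos)
            (ne_of_gt (div_pos (hQ.1 n m) hqm))]
        linarith
      exact mul_le_mul_of_nonneg_left hkey (mul_nonneg (hp.1 n) (hQ.1 n m).le)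
  have key2 : ∑ n, -(p n * Real.log (p n)) ≤ Real.log N := by
    have hterm : ∀ n, -(p n * Real.log (p n)) ≤ 1 / N - p n + p n * Real.log N := by
      intro n
      rcases eq_or_lt_of_le (hp.1 n) with h0 | hpos
      · rw [← h0]; simp
      · have hNpos : (0:ℝ) < N := Nat.cast_pos.mpr hN
        have hlog : Real.log ((p n * N)⁻¹) ≤ (p n * N)⁻¹ - 1 :=
          Real.log_le_sub_one_of_pos (by positivity)
        rw [Real.log_inv, Real.log_mul (ne_of_gt hpos) (ne_of_gt hNpos)] at hlog
        have hid : p n * (p n * N)⁻¹ = 1 / N := by field_simp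
        nlinarith [mul_le_mul_of_nonneg_left hlog hpos.le]
    calc ∑ n, -(p n * Real.log (p n)) ≤ ∑ n, (1 / N - p n + p n * Real.log N) :=
          Finset.sum_le_sum fun n _ => hterm n
      _ = Real.log N := by
          rw [Finset.sum_add_distrib, Finset.sum_sub_distrib, Finset.sum_const,
            ← Finset.sum_mul, hp.2, Finset.card_univ, Fintype.card_fin]
          rw [nsmul_eq_mul, mul_one_div_cancel (Nat.cast_pos.mpr hN).ne']
          ring
  linarith

lemma delta_mem {N : ℕ} (n0 : Fin N) :
    (fun n => if n = n0 then (1:ℝ) else 0) ∈ stdSimplex ℝ (Fin N) := by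
  constructor
  · intro n; dsimp; split <;> norm_num
  · simp

lemma ami_delta {N M : ℕ} (Q : Fin N → Fin M → ℝ) (hQ : rowStochPos Q) (n0 : Fin N) :
    AMI (fun n => if n = n0 then (1:ℝ) else 0) Q = 0 := by
  unfold AMI
  have hden : ∀ m, (∑ l, (if l = n0 then (1:ℝ) else 0) * Q l m) = Q n0 m := by
    intro m; simp [ite_mul]
  refine Finset.sum_eq_zero fun n _ => ?_
  refine Finset.sum_eq_zero fun m _ => ?_
  rcases eq_or_ne n n0 with h | h
  · subst h
    simp [hden m, div_self (ne_of_gt (hQ.1 n m))]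
  · simp [h]

lemma F_contOn {N M : ℕ} (Q : Fin N → Fin M → ℝ) (hQ : rowStochPos Q) (a : Fin N → ℝ)
    (b t : ℝ) :
    ContinuousOn (fun p : Fin N → ℝ => AMI p Q + t * (b - ∑ n, a n * p n))
      (stdSimplex ℝ (Fin N)) := by
  apply ContinuousOn.add
  · unfold AMI
    apply continuousOn_finset_sum
    intro n _
    apply continuousOn_finset_sum
    intro m _
    have hden : ContinuousOn (fun p : Fin N → ℝ => ∑ l, p l * Q l m)
        (stdSimplex ℝ (Fin N)) := by
      apply continuousOn_finset_sum
      intro l _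
      exact ((continuous_apply l).continuousOn).mul continuousOn_const
    refine (((continuous_apply n).continuousOn.mul continuousOn_const).mul ?_)
    apply ContinuousOn.log
    · exact continuousOn_const.div hden (fun p hp => ne_of_gt (denom_pos Q hQ hp m))
    · intro p hp
      exact ne_of_gt (div_pos (hQ.1 n m) (denom_pos Q hQ hp m))
  · apply continuousOn_const.mul
    apply continuousOn_const.sub
    apply continuousOn_finset_sum
    intro n _
    exact continuousOn_const.mul (continuous_apply n).continuousOn

lemma gset_bddAbove {N M : ℕ} (Q : Fin N → Fin M → ℝ) (hQ : rowStochPos Q)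
    (a : Fin N → ℝ) (ha : ∀ n, 0 ≤ a n) (b t : ℝ) :
    BddAbove { x | ∃ p ∈ stdSimplex ℝ (Fin N), x = AMI p Q + t * (b - ∑ n, a n * p n) } := by
  refine ⟨Real.log N + |t| * (|b| + ∑ n, a n), ?_⟩
  rintro x ⟨p, hp, rfl⟩
  have h1 : AMI p Q ≤ Real.log N := ami_le_log Q hQ hp
  have hs0 : 0 ≤ ∑ n, a n * p n := Finset.sum_nonneg fun n _ => mul_nonneg (ha n) (hp.1 n)
  have hs1 : ∑ n, a n * p n ≤ ∑ n, a n := by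
    refine Finset.sum_le_sum fun n _ => ?_
    have hpn1 : p n ≤ 1 := by
      rw [← hp.2]
      exact Finset.single_le_sum (fun i _ => hp.1 i) (Finset.mem_univ n)
    nlinarith [ha n, hp.1 n]
  have h2 : t * (b - ∑ n, a n * p n) ≤ |t| * (|b| + ∑ n, a n) := by
    calc t * (b - ∑ n, a n * p n) ≤ |t * (b - ∑ n, a n * p n)| := le_abs_self _
      _ = |t| * |b - ∑ n, a n * p n| := abs_mul _ _
      _ ≤ |t| * (|b| + ∑ n, a n) := by
          refine mul_le_mul_of_nonneg_left ?_ (abs_nonneg t)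
          calc |b - ∑ n, a n * p n| ≤ |b| + |∑ n, a n * p n| := abs_sub _ _
            _ ≤ |b| + ∑ n, a n := by rw [abs_of_nonneg hs0]; linarith
  linarith

theorem dual_function_positive_subgradient
    {N M : ℕ} (hN : 0 < N) (hM : 0 < M)
    (Q : Fin N → Fin M → ℝ) (hQ : rowStochPos Q)
    (a : Fin N → ℝ) (ha : ∀ n, 0 ≤ a n) (b : ℝ)
    (hb : Finset.univ.inf' (Finset.univ_nonempty_iff.mpr (Fin.pos_iff_nonempty.mp hN)) a < b)
    (Λ : ℝ)
    (hΛ : Real.log N /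
      (b - Finset.univ.inf' (Finset.univ_nonempty_iff.mpr (Fin.pos_iff_nonempty.mp hN)) a)
      < Λ) :
    ∃ d : ℝ, 0 < d ∧ ∀ t : ℝ, gfun Q a b t ≥ gfun Q a b Λ + d * (t - Λ) := by
  set amin := Finset.univ.inf' (Finset.univ_nonempty_iff.mpr (Fin.pos_iff_nonempty.mp hN)) a
    with hamin
  have hba : 0 < b - amin := sub_pos.mpr hb
  have hlogN : 0 ≤ Real.log N := Real.log_nonneg (by exact_mod_cast hN)
  have hΛpos : 0 < Λ := lt_of_le_of_lt (div_nonneg hlogN hba.le) hΛ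
  have hΛb : Real.log N < Λ * (b - amin) := (div_lt_iff₀ hba).mp hΛ
  -- maximizer at Λ
  obtain ⟨n0, _, hn0⟩ := Finset.exists_mem_eq_inf' (Finset.univ_nonempty_iff.mpr
    (Fin.pos_iff_nonempty.mp hN)) a
  have hδ := delta_mem (N := N) n0
  have hSne : ∀ t : ℝ,
      { x | ∃ p ∈ stdSimplex ℝ (Fin N), x = AMI p Q + t * (b - ∑ n, a n * p n) }.Nonempty :=
    fun t => ⟨_, (fun n => if n = n0 then (1:ℝ) else 0), hδ, rfl⟩
  obtain ⟨ps, hps, hmax⟩ := (isCompact_stdSimplex ℝ (Fin N)).exists_isMaxOn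
    ⟨_, hδ⟩ (F_contOn Q hQ a b Λ)
  -- gfun at Λ equals the max value
  have hgΛ : gfun Q a b Λ = AMI ps Q + Λ * (b - ∑ n, a n * ps n) := by
    apply le_antisymm
    · apply csSup_le (hSne Λ)
      rintro x ⟨p, hp, rfl⟩
      exact hmax hp
    · exact le_csSup (gset_bddAbove Q hQ a ha b Λ) ⟨ps, hps, rfl⟩
  set d : ℝ := b - ∑ n, a n * ps n with hd
  have hglb : gfun Q a b Λ ≥ Λ * (b - amin) := by
    have hmem : Λ * (b - amin) ∈
        { x | ∃ p ∈ stdSimplex ℝ (Fin N), x = AMI p Q + Λ * (b - ∑ n, a n * p n) } := by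
      refine ⟨(fun n => if n = n0 then (1:ℝ) else 0), hδ, ?_⟩
      rw [ami_delta Q hQ n0]
      have : ∑ n, a n * (if n = n0 then (1:ℝ) else 0) = a n0 := by simp [mul_ite]
      rw [this, ← hn0]
      ring
    exact le_csSup (gset_bddAbove Q hQ a ha b Λ) hmem
  have hdpos : 0 < d := by
    by_contra hdn
    push_neg at hdn
    have h1 : gfun Q a b Λ ≤ Real.log N := by
      rw [hgΛ]
      have := ami_le_log Q hQ hps
      nlinarith
    linarith
  refine ⟨d, hdpos, fun t => ?_⟩
  have hge : gfun Q a b t ≥ AMI ps Q + t * (b - ∑ n, a n * ps n) :=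
    le_csSup (gset_bddAbove Q hQ a ha b t) ⟨ps, hps, rfl⟩
  have : AMI ps Q + t * (b - ∑ n, a n * ps n)
      = gfun Q a b Λ + d * (t - Λ) := by
    rw [hgΛ, hd]; ring
  linarith
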